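/- Uniform (in dimension and in τ) energy estimate for the Galerkin system under coercivity of the damping coefficient: for all real numbers δ > 0, c > 0, ᾱ > 0, τ̄ > 0, T > 0 there exists a constant C > 0, depending only on δ, c, ᾱ, τ̄, T (in particular independent of τ, n, K, M, and F), with the following property. For every τ ∈ (0, τ̄], with b := δ + τ c², every n ∈ ℕ, every symmetric positive semidefinite n×n real matrix K, every continuous M : [0,T] → ℝ^{n×n} satisfying the coercivity condition ⟨M(t) η, η⟩ ≥ ᾱ |η|² for all η ∈ ℝⁿ and t ∈ [0,T], every continuous F : [0,T] → ℝⁿ, and every three-times continuously differentiable solution ξ : [0,T] → ℝⁿ of the Galerkin system with ξ(0) = ξ'(0) = ξ''(0) = 0, one has for all t ∈ [0,T]: τ |ξ''(t)|² + ᾱ ∫₀ᵗ |ξ''(s)|² ds + ⟨K ξ'(t), ξ'(t)⟩ + |ξ'(t)|² ≤ C ∫₀ᵀ |F(s)|² ds. -/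

import Mathlib

open scoped RealInnerProductSpace
open Set intervalIntegral MeasureTheory

/-- Monotonicity from nonpositive derivative within `Icc`. -/
lemma aux_mono {a b : ℝ} {f f' : ℝ → ℝ}
    (hd : ∀ t ∈ Icc a b, HasDerivWithinAt f (f' t) (Icc a b) t)
    (h0 : ∀ t ∈ Icc a b, f' t ≤ 0) :
    ∀ t ∈ Icc a b, f t ≤ f a := by
  intro t ht
  have hab : a ≤ b := le_trans ht.1 ht.2
  have hcont : ContinuousOn f (Icc a b) := fun s hs => (hd s hs).continuousWithinAt
  have hA : AntitoneOn f (Icc a b) := by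
    apply antitoneOn_of_deriv_nonpos (convex_Icc a b) hcont
    · intro x hx
      rw [interior_Icc] at hx
      exact (((hd x (Ioo_subset_Icc_self hx)).hasDerivAt
        (Icc_mem_nhds hx.1 hx.2)).differentiableAt).differentiableWithinAt
    · intro x hx
      rw [interior_Icc] at hx
      rw [((hd x (Ioo_subset_Icc_self hx)).hasDerivAt (Icc_mem_nhds hx.1 hx.2)).deriv]
      exact h0 x (Ioo_subset_Icc_self hx)
  exact hA (left_mem_Icc.2 hab) ht ht.1

/-- Derivative of `t ↦ ∫ s in a..t, g s` within `Icc a b` for continuous `g`. -/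
lemma aux_int_deriv {a b : ℝ} {E : Type*} [NormedAddCommGroup E] [NormedSpace ℝ E] [CompleteSpace E]
    {g : ℝ → E} (hg : ContinuousOn g (Icc a b)) :
    ∀ t ∈ Icc a b, HasDerivWithinAt (fun x => ∫ s in a..x, g s) (g t) (Icc a b) t := by
  intro t ht
  haveI : Fact (t ∈ Icc a b) := ⟨ht⟩
  have hint : IntervalIntegrable g MeasureTheory.volume a t := by
    apply (hg.mono _).intervalIntegrable
    rw [uIcc_of_le ht.1]
    exact Icc_subset_Icc le_rfl ht.2
  exact integral_hasDerivWithinAt_right hint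
    (hg.stronglyMeasurableAtFilter_nhdsWithin measurableSet_Icc t)
    (hg t ht)

/-- ε-Cauchy–Schwarz for a symmetric positive-semidefinite operator. -/
lemma aux_cs_eps {n : ℕ} (K : EuclideanSpace ℝ (Fin n) →L[ℝ] EuclideanSpace ℝ (Fin n))
    (hsym : ∀ x y : EuclideanSpace ℝ (Fin n), ⟪K x, y⟫ = ⟪x, K y⟫)
    (hpos : ∀ x : EuclideanSpace ℝ (Fin n), 0 ≤ ⟪K x, x⟫)
    (x y : EuclideanSpace ℝ (Fin n)) {ε : ℝ} (hε : 0 < ε) :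
    ⟪K x, y⟫ ≤ (ε * ⟪K x, x⟫ + ⟪K y, y⟫ / ε) / 2 := by
  have h0 := hpos (ε • x - y)
  have hKxy : ⟪K y, x⟫ = ⟪K x, y⟫ := by
    rw [hsym y x, real_inner_comm]
  rw [map_sub, K.map_smul] at h0
  simp only [inner_sub_left, inner_sub_right, inner_smul_left, inner_smul_right,
    RingHom.id_apply, RCLike.ofReal_real_eq_id, id_eq, conj_trivial] at h0
  rw [hKxy] at h0
  have h2 : 0 ≤ ε * ε * ⟪K x, x⟫ - 2 * ε * ⟪K x, y⟫ + ⟪K y, y⟫ := by nlinarith [h0]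
  rw [← sub_nonneg]
  have h3 : (ε * ⟪K x, x⟫ + ⟪K y, y⟫ / ε) / 2 - ⟪K x, y⟫
      = (ε * ε * ⟪K x, x⟫ - 2 * ε * ⟪K x, y⟫ + ⟪K y, y⟫) / (2 * ε) := by
    field_simp
    ring
  rw [h3]
  positivity

/-- If `f 0 = 0` then `⟪A f(t), f(t)⟫ ≤ t ∫₀ᵗ ⟪A f'(s), f'(s)⟫` for symmetric PSD `A`. -/
lemma aux_qbound {n : ℕ} {T : ℝ}
    (A : EuclideanSpace ℝ (Fin n) →L[ℝ] EuclideanSpace ℝ (Fin n))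
    (hsym : ∀ x y : EuclideanSpace ℝ (Fin n), ⟪A x, y⟫ = ⟪x, A y⟫)
    (hpos : ∀ x : EuclideanSpace ℝ (Fin n), 0 ≤ ⟪A x, x⟫)
    {f f' : ℝ → EuclideanSpace ℝ (Fin n)}
    (hf : ∀ s ∈ Icc (0:ℝ) T, HasDerivWithinAt f (f' s) (Icc 0 T) s)
    (hf'c : ContinuousOn f' (Icc 0 T))
    (hf0 : f 0 = 0) {t : ℝ} (ht : t ∈ Icc (0:ℝ) T) :
    ⟪A (f t), f t⟫ ≤ t * ∫ s in (0:ℝ)..t, ⟪A (f' s), f' s⟫ := by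
  rcases eq_or_lt_of_le ht.1 with h0 | htpos
  · simp [← h0, hf0]
  -- t > 0
  have hIcc : Icc (0:ℝ) t ⊆ Icc 0 T := Icc_subset_Icc le_rfl ht.2
  set q : EuclideanSpace ℝ (Fin n) → ℝ := fun x => ⟪A x, x⟫ with hq
  set h : ℝ → ℝ := fun s => (t * q (f' s) + q (f t) / t) / 2 with hh
  have hqc : ContinuousOn (fun s => q (f' s)) (Icc 0 t) := by
    apply ContinuousOn.inner
    · exact (A.continuous.comp_continuousOn (hf'c.mono hIcc))
    · exact hf'c.mono hIcc
  have hhc : ContinuousOn h (Icc 0 t) := by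
    apply ContinuousOn.div_const
    apply ContinuousOn.add
    · exact continuousOn_const.mul hqc
    · exact continuousOn_const
  set W : ℝ → ℝ := fun s => ⟪A (f s), f t⟫ - ∫ u in (0:ℝ)..s, h u with hW
  have hWd : ∀ s ∈ Icc (0:ℝ) t,
      HasDerivWithinAt W (⟪A (f' s), f t⟫ - h s) (Icc 0 t) s := by
    intro s hs
    apply HasDerivWithinAt.sub
    · have h1 : HasDerivWithinAt (fun u => A (f u)) (A (f' s)) (Icc 0 t) s :=
        (A.hasFDerivAt.comp_hasDerivWithinAt s ((hf s (hIcc hs)).mono hIcc))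
      have h2 := h1.inner ℝ (hasDerivWithinAt_const (𝕜 := ℝ) s (Icc (0:ℝ) t) (f t))
      simpa using h2
    · exact aux_int_deriv hhc s hs
  have hW0 : ∀ s ∈ Icc (0:ℝ) t, ⟪A (f' s), f t⟫ - h s ≤ 0 := by
    intro s hs
    have := aux_cs_eps A hsym hpos (f' s) (f t) htpos
    simpa [hh, hq, sub_nonpos] using this
  have hWt := aux_mono hWd hW0 t (right_mem_Icc.2 (le_of_lt htpos))
  have hWa : W 0 = 0 := by simp [hW, hf0]
  rw [hWa] at hWt
  -- unfold W t: ⟪A f t, f t⟫ ≤ ∫₀ᵗ h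
  have hint : ∫ u in (0:ℝ)..t, h u
      = (t * ∫ u in (0:ℝ)..t, q (f' u)) / 2 + q (f t) / 2 := by
    have hint1 : IntervalIntegrable (fun u => t * q (f' u)) MeasureTheory.volume 0 t := by
      apply ContinuousOn.intervalIntegrable
      rw [uIcc_of_le (le_of_lt htpos)]
      exact continuousOn_const.mul hqc
    have hint2 : IntervalIntegrable (fun _ : ℝ => q (f t) / t) MeasureTheory.volume 0 t :=
      intervalIntegrable_const
    have : ∫ u in (0:ℝ)..t, h u
        = ((∫ u in (0:ℝ)..t, t * q (f' u)) + ∫ u in (0:ℝ)..t, q (f t) / t) / 2 := by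
      rw [← intervalIntegral.integral_add hint1 hint2]
      simp only [hh]
      rw [intervalIntegral.integral_div]
    rw [this, intervalIntegral.integral_const, intervalIntegral.integral_const_mul]
    have : (t - 0) • (q (f t) / t) = q (f t) := by
      rw [sub_zero, smul_eq_mul, mul_div_assoc', mul_comm, mul_div_assoc, div_self htpos.ne', mul_one]
    rw [this]
    ring
  rw [hW] at hWt
  simp only [sub_nonpos] at hWt
  have hle : ⟪A (f t), f t⟫ ≤ (t * ∫ u in (0:ℝ)..t, q (f' u)) / 2 + q (f t) / 2 := by
    rw [← hint]
    linarith [hWt]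
  have : q (f t) ≤ t * ∫ u in (0:ℝ)..t, q (f' u) := by
    simp only [hq] at hle ⊢
    linarith
  simpa [hq] using this

lemma aux_int_mono {T t : ℝ} {g : ℝ → ℝ} (hg : ContinuousOn g (Icc 0 T))
    (hnn : ∀ s ∈ Icc (0:ℝ) T, 0 ≤ g s) (ht : t ∈ Icc (0:ℝ) T) :
    ∫ s in (0:ℝ)..t, g s ≤ ∫ s in (0:ℝ)..T, g s := by
  apply intervalIntegral.integral_mono_interval le_rfl ht.1 ht.2
  · filter_upwards [MeasureTheory.ae_restrict_mem measurableSet_Ioc] with s hs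
    exact hnn s ⟨le_of_lt hs.1, hs.2⟩
  · apply ContinuousOn.intervalIntegrable
    rwa [uIcc_of_le (le_trans ht.1 ht.2)]

lemma aux_int_nonneg {T t : ℝ} {g : ℝ → ℝ}
    (hnn : ∀ s ∈ Icc (0:ℝ) T, 0 ≤ g s) (ht : t ∈ Icc (0:ℝ) T) :
    0 ≤ ∫ s in (0:ℝ)..t, g s := by
  apply intervalIntegral.integral_nonneg ht.1
  intro u hu
  exact hnn u ⟨hu.1, le_trans hu.2 ht.2⟩

set_option maxHeartbeats 1000000 in
/-- Uniform (in dimension and in τ) energy estimate for the Galerkin system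
under coercivity of the damping coefficient: for all `δ, c, α₀, τmax, T > 0`
there is `C > 0`, independent of `τ, n, K, M, F`, such that for every
`τ ∈ (0, τmax]`, with `b = δ + τ c²`, every C³ solution `ξ` of
`τ ξ''' + M(t) ξ'' + b K ξ' + c² K ξ = F(t)` with zero initial data, `K`
symmetric positive semidefinite and `⟨M(t)η, η⟩ ≥ α₀|η|²`, satisfies
`τ|ξ''(t)|² + α₀∫₀ᵗ|ξ''|² + ⟨K ξ'(t), ξ'(t)⟩ + |ξ'(t)|² ≤ C ∫₀ᵀ |F|²`. -/
theorem galerkin_energy_estimate_tau_independent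
    (δ c α₀ τmax T : ℝ) (hδ : 0 < δ) (hc : 0 < c) (hα : 0 < α₀)
    (hτmax : 0 < τmax) (hT : 0 < T) :
    ∃ C : ℝ, 0 < C ∧
      ∀ τ ∈ Set.Ioc (0:ℝ) τmax,
        ∀ (n : ℕ)
          (K : EuclideanSpace ℝ (Fin n) →L[ℝ] EuclideanSpace ℝ (Fin n)),
          (∀ x y : EuclideanSpace ℝ (Fin n), ⟪K x, y⟫ = ⟪x, K y⟫) →
          (∀ x : EuclideanSpace ℝ (Fin n), 0 ≤ ⟪K x, x⟫) →
          ∀ (M : ℝ → (EuclideanSpace ℝ (Fin n) →L[ℝ] EuclideanSpace ℝ (Fin n))),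
          ContinuousOn M (Set.Icc 0 T) →
          (∀ t ∈ Set.Icc (0:ℝ) T, ∀ η : EuclideanSpace ℝ (Fin n),
            α₀ * ‖η‖ ^ 2 ≤ ⟪M t η, η⟫) →
          ∀ (F : ℝ → EuclideanSpace ℝ (Fin n)),
          ContinuousOn F (Set.Icc 0 T) →
          ∀ (ξ ξ' ξ'' ξ''' : ℝ → EuclideanSpace ℝ (Fin n)),
          (∀ t ∈ Set.Icc 0 T, HasDerivWithinAt ξ (ξ' t) (Set.Icc 0 T) t) →
          (∀ t ∈ Set.Icc 0 T, HasDerivWithinAt ξ' (ξ'' t) (Set.Icc 0 T) t) →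
          (∀ t ∈ Set.Icc 0 T, HasDerivWithinAt ξ'' (ξ''' t) (Set.Icc 0 T) t) →
          ContinuousOn ξ''' (Set.Icc 0 T) →
          ξ 0 = 0 → ξ' 0 = 0 → ξ'' 0 = 0 →
          (∀ t ∈ Set.Icc 0 T,
            τ • ξ''' t + M t (ξ'' t) + (δ + τ * c ^ 2) • K (ξ' t)
              + c ^ 2 • K (ξ t) = F t) →
          ∀ t ∈ Set.Icc (0:ℝ) T,
            τ * ‖ξ'' t‖ ^ 2 + α₀ * (∫ s in (0:ℝ)..t, ‖ξ'' s‖ ^ 2)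
              + ⟪K (ξ' t), ξ' t⟫ + ‖ξ' t‖ ^ 2
              ≤ C * ∫ s in (0:ℝ)..T, ‖F s‖ ^ 2 := by
  set L : ℝ := (4/δ) * (c^2 + c^2*c^2*T/δ) with hLdef
  have hL : 0 < L := by positivity
  set eT : ℝ := Real.exp (L*T) with heTdef
  have heT : 0 < eT := Real.exp_pos _
  refine ⟨(1/(2*α₀)) * ((2 + 2*eT) * (1 + T/α₀) + (4/δ)*eT), by positivity, ?_⟩
  rintro τ ⟨hτ0, hτle⟩ n K hKsym hKpos M hMc hMco F hFc ξ ξ' ξ'' ξ''' hd1 hd2 hd3 hc3 h0 h0' h0'' hODE t ht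
  set b : ℝ := δ + τ*c^2 with hbdef
  have hb : 0 < b := by positivity
  have hδb : δ ≤ b := by nlinarith
  -- continuity facts
  have hcξ : ContinuousOn ξ (Set.Icc 0 T) := fun s hs => (hd1 s hs).continuousWithinAt
  have hcξ' : ContinuousOn ξ' (Set.Icc 0 T) := fun s hs => (hd2 s hs).continuousWithinAt
  have hcξ'' : ContinuousOn ξ'' (Set.Icc 0 T) := fun s hs => (hd3 s hs).continuousWithinAt
  have hq'c : ContinuousOn (fun v => ⟪K (ξ' v), ξ' v⟫) (Set.Icc 0 T) :=
    ContinuousOn.inner (K.continuous.comp_continuousOn hcξ') hcξ'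
  have hI2c : ContinuousOn (fun v => ‖ξ'' v‖^2) (Set.Icc 0 T) := (hcξ''.norm).pow 2
  have hF2c : ContinuousOn (fun v => ‖F v‖^2) (Set.Icc 0 T) := (hFc.norm).pow 2
  -- basic notation
  set FI : ℝ := ∫ s in (0:ℝ)..T, ‖F s‖^2 with hFIdef
  set AF : ℝ := (1/(2*α₀)) * FI with hAFdef
  have hAFn : 0 ≤ AF := by
    have := aux_int_nonneg (g := fun v => ‖F v‖^2) (T := T)
      (fun s _ => by positivity) (Set.right_mem_Icc.2 hT.le)
    rw [hAFdef, hFIdef]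
    have h2α : (0:ℝ) ≤ 1/(2*α₀) := by positivity
    exact mul_nonneg h2α this
  set u : ℝ → ℝ := fun s => ∫ v in (0:ℝ)..s, ⟪K (ξ' v), ξ' v⟫ with hudef
  set I : ℝ → ℝ := fun s => ∫ v in (0:ℝ)..s, ‖ξ'' v‖^2 with hIdef
  have hun : ∀ s ∈ Set.Icc (0:ℝ) T, 0 ≤ u s := fun s hs =>
    aux_int_nonneg (fun v _ => hKpos (ξ' v)) hs
  have hIn : ∀ s ∈ Set.Icc (0:ℝ) T, 0 ≤ I s := fun s hs =>
    aux_int_nonneg (fun v _ => by positivity) hs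
  -- the energy functional
  set E : ℝ → ℝ := fun s =>
    τ/2*‖ξ'' s‖^2 + b/2*⟪K (ξ' s), ξ' s⟫ + c^2*⟪K (ξ s), ξ' s⟫
    + α₀/2*(I s) - (1/(2*α₀))*(∫ v in (0:ℝ)..s, ‖F v‖^2)
    - c^2*(u s) with hEdef
  have hEmono : ∀ s ∈ Set.Icc (0:ℝ) T, E s ≤ E 0 := by
    apply aux_mono (f' := fun s =>
      τ/2*(⟪ξ'' s, ξ''' s⟫ + ⟪ξ''' s, ξ'' s⟫)
      + b/2*(⟪K (ξ' s), ξ'' s⟫ + ⟪K (ξ'' s), ξ' s⟫)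
      + c^2*(⟪K (ξ s), ξ'' s⟫ + ⟪K (ξ' s), ξ' s⟫)
      + α₀/2*‖ξ'' s‖^2 - (1/(2*α₀))*‖F s‖^2 - c^2*⟪K (ξ' s), ξ' s⟫)
    · intro s hs
      have e1 : HasDerivWithinAt (fun x => ‖ξ'' x‖^2)
          (⟪ξ'' s, ξ''' s⟫ + ⟪ξ''' s, ξ'' s⟫) (Set.Icc 0 T) s := by
        have h := HasDerivWithinAt.inner ℝ (hd3 s hs) (hd3 s hs)
        simpa only [real_inner_self_eq_norm_sq] using h
      have eK' : HasDerivWithinAt (fun x => K (ξ' x)) (K (ξ'' s)) (Set.Icc 0 T) s :=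
        K.hasFDerivAt.comp_hasDerivWithinAt s (hd2 s hs)
      have eK : HasDerivWithinAt (fun x => K (ξ x)) (K (ξ' s)) (Set.Icc 0 T) s :=
        K.hasFDerivAt.comp_hasDerivWithinAt s (hd1 s hs)
      have e2 : HasDerivWithinAt (fun x => ⟪K (ξ' x), ξ' x⟫)
          (⟪K (ξ' s), ξ'' s⟫ + ⟪K (ξ'' s), ξ' s⟫) (Set.Icc 0 T) s :=
        HasDerivWithinAt.inner ℝ eK' (hd2 s hs)
      have e3 : HasDerivWithinAt (fun x => ⟪K (ξ x), ξ' x⟫)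
          (⟪K (ξ s), ξ'' s⟫ + ⟪K (ξ' s), ξ' s⟫) (Set.Icc 0 T) s :=
        HasDerivWithinAt.inner ℝ eK (hd2 s hs)
      have e4 := aux_int_deriv hI2c s hs
      have e5 := aux_int_deriv hF2c s hs
      have e6 := aux_int_deriv hq'c s hs
      rw [hEdef, hIdef, hudef]
      exact ((((((e1.const_mul (τ/2)).add (e2.const_mul (b/2))).add
        (e3.const_mul (c^2))).add (e4.const_mul (α₀/2))).sub
        (e5.const_mul (1/(2*α₀)))).sub (e6.const_mul (c^2)))
    · intro s hs
      beta_reduce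
      have hode := hODE s hs
      have h1 : τ • ξ''' s = F s - M s (ξ'' s) - b • K (ξ' s) - c^2 • K (ξ s) := by
        rw [← hode]; abel
      have h2 : τ * ⟪ξ''' s, ξ'' s⟫
          = ⟪F s, ξ'' s⟫ - ⟪M s (ξ'' s), ξ'' s⟫ - b*⟪K (ξ' s), ξ'' s⟫
            - c^2*⟪K (ξ s), ξ'' s⟫ := by
        rw [← real_inner_smul_left, h1]
        simp only [inner_sub_left, real_inner_smul_left]
      have hsy1 : ⟪K (ξ'' s), ξ' s⟫ = ⟪K (ξ' s), ξ'' s⟫ := by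
        rw [hKsym]; exact real_inner_comm _ _
      have hsy2 : ⟪ξ'' s, ξ''' s⟫ = ⟪ξ''' s, ξ'' s⟫ := real_inner_comm _ _
      have hM := hMco s hs (ξ'' s)
      have hFi : ⟪F s, ξ'' s⟫ ≤ ‖F s‖ * ‖ξ'' s‖ := real_inner_le_norm _ _
      have hhalf : ‖F s‖ * ‖ξ'' s‖ ≤ α₀/2*‖ξ'' s‖^2 + 1/(2*α₀)*‖F s‖^2 := by
        rw [← sub_nonneg]
        have e : α₀/2*‖ξ'' s‖^2 + 1/(2*α₀)*‖F s‖^2 - ‖F s‖ * ‖ξ'' s‖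
            = (α₀*‖ξ'' s‖ - ‖F s‖)^2 / (2*α₀) := by field_simp; ring
        rw [e]; positivity
      rw [hsy1, hsy2]
      have h2' : τ*⟪ξ''' s, ξ'' s⟫ + b*⟪K (ξ' s), ξ'' s⟫ + c^2*⟪K (ξ s), ξ'' s⟫
          = ⟪F s, ξ'' s⟫ - ⟪M s (ξ'' s), ξ'' s⟫ := by rw [h2]; ring
      have e : τ/2*(⟪ξ''' s, ξ'' s⟫ + ⟪ξ''' s, ξ'' s⟫)
          + b/2*(⟪K (ξ' s), ξ'' s⟫ + ⟪K (ξ' s), ξ'' s⟫)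
          + c^2*(⟪K (ξ s), ξ'' s⟫ + ⟪K (ξ' s), ξ' s⟫)
          + α₀/2*‖ξ'' s‖^2 - (1/(2*α₀))*‖F s‖^2 - c^2*⟪K (ξ' s), ξ' s⟫
          = (τ*⟪ξ''' s, ξ'' s⟫ + b*⟪K (ξ' s), ξ'' s⟫ + c^2*⟪K (ξ s), ξ'' s⟫)
            + α₀/2*‖ξ'' s‖^2 - (1/(2*α₀))*‖F s‖^2 := by ring
      rw [e, h2']
      linarith [hM, hFi, hhalf]
  have hE0 : E 0 = 0 := by
    rw [hEdef, hIdef, hudef]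
    simp [h0, h0', h0'']
  -- rearranged energy inequality
  have hEt : ∀ s ∈ Set.Icc (0:ℝ) T,
      τ/2*‖ξ'' s‖^2 + b/2*⟪K (ξ' s), ξ' s⟫ + c^2*⟪K (ξ s), ξ' s⟫ + α₀/2*(I s)
        ≤ AF + c^2*(u s) := by
    intro s hs
    have h := hEmono s hs
    rw [hE0] at h
    simp only [hEdef] at h
    have hFle : (1/(2*α₀))*(∫ v in (0:ℝ)..s, ‖F v‖^2) ≤ AF := by
      rw [hAFdef, hFIdef]
      have := aux_int_mono hF2c (fun v _ => by positivity) hs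
      have h2α : (0:ℝ) ≤ 1/(2*α₀) := by positivity
      exact mul_le_mul_of_nonneg_left this h2α
    linarith
  -- cross term bound
  have hcross : ∀ s ∈ Set.Icc (0:ℝ) T,
      -(c^2*⟪K (ξ s), ξ' s⟫)
        ≤ (c^2*c^2/b)*⟪K (ξ s), ξ s⟫ + (b/4)*⟪K (ξ' s), ξ' s⟫ := by
    intro s hs
    have hε : (0:ℝ) < 2*c^2/b := by positivity
    have h := aux_cs_eps K hKsym hKpos (-(ξ s)) (ξ' s) hε
    simp only [map_neg, inner_neg_left, inner_neg_right, neg_neg] at h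
    have h' := mul_le_mul_of_nonneg_left h (by positivity : (0:ℝ) ≤ c^2)
    have heq : c^2*(((2*c^2/b)*⟪K (ξ s), ξ s⟫ + ⟪K (ξ' s), ξ' s⟫/(2*c^2/b))/2)
        = (c^2*c^2/b)*⟪K (ξ s), ξ s⟫ + (b/4)*⟪K (ξ' s), ξ' s⟫ := by
      field_simp; ring
    rw [heq] at h'
    linarith
  -- bound on q(ξ)
  have hqξ : ∀ s ∈ Set.Icc (0:ℝ) T, ⟪K (ξ s), ξ s⟫ ≤ T * u s := by
    intro s hs
    have h := aux_qbound K hKsym hKpos hd1 hcξ' h0 hs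
    simp only [hudef]
    nlinarith [hun s hs, hs.1, hs.2, h]
  -- the key inequality
  have hkey : ∀ s ∈ Set.Icc (0:ℝ) T,
      τ/2*‖ξ'' s‖^2 + δ/4*⟪K (ξ' s), ξ' s⟫ + α₀/2*(I s)
        ≤ AF + (c^2 + c^2*c^2*T/δ) * u s := by
    intro s hs
    have h1 := hEt s hs
    have h2 := hcross s hs
    have h3 := hqξ s hs
    have h4 := hKpos (ξ' s)
    have h5 := hKpos (ξ s)
    have h7 := hun s hs
    have h8 : (c^2*c^2/b)*⟪K (ξ s), ξ s⟫ ≤ (c^2*c^2/δ)*(T*u s) := by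
      have hb' : c^2*c^2/b ≤ c^2*c^2/δ := by
        apply div_le_div_of_nonneg_left (by positivity) hδ hδb
      have hTu : 0 ≤ T * u s := mul_nonneg hT.le h7
      have p1 : (0:ℝ) ≤ c^2*c^2/b := by positivity
      have p2 := mul_le_mul_of_nonneg_left h3 p1
      have p3 := mul_le_mul_of_nonneg_right hb' hTu
      linarith
    have h9 : δ/4*⟪K (ξ' s), ξ' s⟫ ≤ b/4*⟪K (ξ' s), ξ' s⟫ := by
      nlinarith [mul_nonneg (sub_nonneg.2 hδb) h4]
    have hexp : (c^2 + c^2*c^2*T/δ) * u s = c^2*(u s) + c^2*c^2/δ*(T*u s) := by ring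
    linarith
  -- Gronwall bound for q(ξ')
  have keyB : ∀ s ∈ Set.Icc (0:ℝ) T,
      ⟪K (ξ' s), ξ' s⟫ ≤ 4*AF/δ + L * u s := by
    intro s hs
    have h := hkey s hs
    have hn1 : 0 ≤ τ/2*‖ξ'' s‖^2 := by positivity
    have hn2 : 0 ≤ α₀/2*(I s) := mul_nonneg (by positivity) (hIn s hs)
    have h' : δ/4 * ⟪K (ξ' s), ξ' s⟫ ≤ AF + (c^2 + c^2*c^2*T/δ) * u s := by linarith
    have h2 := mul_le_mul_of_nonneg_left h' (by positivity : (0:ℝ) ≤ 4/δ)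
    have e1 : (4/δ)*(δ/4*⟪K (ξ' s), ξ' s⟫) = ⟪K (ξ' s), ξ' s⟫ := by
      field_simp
    have e2 : (4/δ)*(AF + (c^2 + c^2*c^2*T/δ)*u s) = 4*AF/δ + L*u s := by
      rw [hLdef]; ring
    rw [e1, e2] at h2
    exact h2
  -- Gronwall
  set V : ℝ → ℝ := fun s => (4*AF/δ + L * u s) * Real.exp (-L * s) with hVdef
  have hVmono : ∀ s ∈ Set.Icc (0:ℝ) T, V s ≤ V 0 := by
    apply aux_mono (f' := fun s =>
      (L * ⟪K (ξ' s), ξ' s⟫) * Real.exp (-L*s)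
      + (4*AF/δ + L*u s) * (Real.exp (-L*s) * (-L)))
    · intro s hs
      have h1 : HasDerivWithinAt (fun x => 4*AF/δ + L * u x)
          (L * ⟪K (ξ' s), ξ' s⟫) (Set.Icc 0 T) s := by
        have h := ((aux_int_deriv hq'c s hs).const_mul L).const_add (4*AF/δ)
        rw [hudef]
        exact h
      have h2 : HasDerivWithinAt (fun x => Real.exp (-L*x))
          (Real.exp (-L*s) * (-L)) (Set.Icc 0 T) s := by
        have h3 : HasDerivAt (fun x => Real.exp (-L*x)) (Real.exp (-L*s) * (-L)) s := by
          simpa using (HasDerivAt.exp ((hasDerivAt_id s).const_mul (-L)))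
        exact h3.hasDerivWithinAt
      rw [hVdef]
      exact h1.mul h2
    · intro s hs
      beta_reduce
      have hB := keyB s hs
      have he : (0:ℝ) < Real.exp (-L*s) := Real.exp_pos _
      have heq : (L * ⟪K (ξ' s), ξ' s⟫) * Real.exp (-L*s)
          + (4*AF/δ + L*u s) * (Real.exp (-L*s) * (-L))
          = (L * Real.exp (-L*s)) * (⟪K (ξ' s), ξ' s⟫ - (4*AF/δ + L*u s)) := by ring
      rw [heq]
      have h1 : 0 ≤ L * Real.exp (-L*s) := by positivity
      have h2 : 0 ≤ (4*AF/δ + L*u s) - ⟪K (ξ' s), ξ' s⟫ := by linarith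
      nlinarith [mul_nonneg h1 h2]
  have hV0 : V 0 = 4*AF/δ := by
    rw [hVdef, hudef]
    simp
  have hu4 : ∀ s ∈ Set.Icc (0:ℝ) T, 4*AF/δ + L * u s ≤ (4*AF/δ) * eT := by
    intro s hs
    have h := hVmono s hs
    rw [hV0, hVdef] at h
    have he : (0:ℝ) < Real.exp (L*s) := Real.exp_pos _
    have h2 := mul_le_mul_of_nonneg_right h he.le
    have e1 : (4*AF/δ + L*u s) * Real.exp (-L*s) * Real.exp (L*s)
        = 4*AF/δ + L*u s := by
      rw [mul_assoc, ← Real.exp_add]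
      have e : -L*s + L*s = 0 := by ring
      rw [e, Real.exp_zero, mul_one]
    rw [e1] at h2
    have h3 : Real.exp (L*s) ≤ eT := by
      rw [heTdef]
      exact Real.exp_le_exp.2 (mul_le_mul_of_nonneg_left hs.2 hL.le)
    have h4 : (0:ℝ) ≤ 4*AF/δ := div_nonneg (by linarith) hδ.le
    nlinarith
  -- conclusion at t
  have hQ't : ⟪K (ξ' t), ξ' t⟫ ≤ (4*AF/δ) * eT := le_trans (keyB t ht) (hu4 t ht)
  have hLu : L * u t ≤ (4*AF/δ) * eT := by
    have h := hu4 t ht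
    have : (0:ℝ) ≤ 4*AF/δ := div_nonneg (by linarith) hδ.le
    linarith
  have hL0u : (c^2 + c^2*c^2*T/δ) * u t ≤ AF * eT := by
    have e : (c^2 + c^2*c^2*T/δ) * u t = (δ/4) * (L * u t) := by
      rw [hLdef]; field_simp
    have e2 : (δ/4) * ((4*AF/δ) * eT) = AF * eT := by field_simp
    rw [e]
    calc (δ/4) * (L * u t) ≤ (δ/4) * ((4*AF/δ) * eT) :=
          mul_le_mul_of_nonneg_left hLu (by positivity)
      _ = AF * eT := e2
  have hmain : τ*‖ξ'' t‖^2 + α₀*(I t) ≤ 2*AF + 2*AF*eT := by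
    have h := hkey t ht
    have h4 : 0 ≤ δ/4*⟪K (ξ' t), ξ' t⟫ := mul_nonneg (by positivity) (hKpos (ξ' t))
    linarith [hL0u]
  have hxi' : ‖ξ' t‖^2 ≤ T * I t := by
    have hidsym : ∀ x y : EuclideanSpace ℝ (Fin n),
        ⟪(ContinuousLinearMap.id ℝ (EuclideanSpace ℝ (Fin n))) x, y⟫
          = ⟪x, (ContinuousLinearMap.id ℝ (EuclideanSpace ℝ (Fin n))) y⟫ := by
      intro x y; simp
    have hidpos : ∀ x : EuclideanSpace ℝ (Fin n),
        0 ≤ ⟪(ContinuousLinearMap.id ℝ (EuclideanSpace ℝ (Fin n))) x, x⟫ := by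
      intro x
      rw [ContinuousLinearMap.id_apply, real_inner_self_eq_norm_sq]
      positivity
    have h := aux_qbound (ContinuousLinearMap.id ℝ (EuclideanSpace ℝ (Fin n)))
      hidsym hidpos hd2 hcξ'' h0' ht
    simp only [ContinuousLinearMap.id_apply, real_inner_self_eq_norm_sq] at h
    have hInt : 0 ≤ ∫ v in (0:ℝ)..t, ‖ξ'' v‖^2 :=
      aux_int_nonneg (fun v _ => by positivity) ht
    have h2 := mul_le_mul_of_nonneg_right ht.2 hInt
    simp only [hIdef]
    linarith
  have hTIt : T * I t ≤ T * ((2*AF + 2*AF*eT)/α₀) := by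
    have hIt : I t ≤ (2*AF + 2*AF*eT)/α₀ := by
      rw [le_div_iff₀ hα]
      nlinarith [hmain, sq_nonneg ‖ξ'' t‖, hτ0]
    exact mul_le_mul_of_nonneg_left hIt hT.le
  have hCFI : (1/(2*α₀)) * ((2 + 2*eT) * (1 + T/α₀) + (4/δ)*eT) * FI
      = 2*AF + 2*AF*eT + (4*AF/δ)*eT + T*((2*AF + 2*AF*eT)/α₀) := by
    rw [hAFdef]; field_simp; ring
  simp only [hIdef] at hmain hTIt hxi'
  linarith [hmain, hQ't, hxi', hTIt, hCFI]
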